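/- Let X be a nonnegative random variable on a probability space such that E[exp(−a·X²)] = exp(−√a) for every a > 0. Then for every ε > 0, P(X ≤ ε) ≤ exp(−1/(4ε²)). -/

import Mathlib

open MeasureTheory

/-- If `X` is a nonnegative random variable on a probability space with
`E[exp (-a X²)] = exp (-√a)` for every `a > 0`, then `P(X ≤ ε) ≤ exp (-1/(4ε²))` for
every `ε > 0`. -/
theorem stmt_3 (Ω : Type) [MeasurableSpace Ω] (P : Measure Ω) [IsProbabilityMeasure P]
    (X : Ω → ℝ) (hXm : Measurable X) (hX0 : ∀ ω, 0 ≤ X ω)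
    (hlap : ∀ a : ℝ, 0 < a →
      ∫ ω, Real.exp (-(a * (X ω) ^ 2)) ∂P = Real.exp (-Real.sqrt a))
    (ε : ℝ) (hε : 0 < ε) :
    P {ω | X ω ≤ ε} ≤ ENNReal.ofReal (Real.exp (-(1 / (4 * ε ^ 2)))) := by
  set a : ℝ := 1 / (4 * ε ^ 4) with ha_def
  have ha : 0 < a := by positivity
  have hsqrt : Real.sqrt a = 1 / (2 * ε ^ 2) := by
    rw [show a = (1 / (2 * ε ^ 2)) ^ 2 by rw [ha_def]; field_simp; ring]
    exact Real.sqrt_sq (by positivity)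
  set S : Set Ω := {ω | X ω ≤ ε} with hS_def
  have hSm : MeasurableSet S := hXm measurableSet_Iic
  have hfm : Measurable fun ω => Real.exp (-(a * (X ω) ^ 2)) := by
    measurability
  have hint : Integrable (fun ω => Real.exp (-(a * (X ω) ^ 2))) P := by
    refine ⟨hfm.aestronglyMeasurable, ?_⟩
    refine (hasFiniteIntegral_const (1 : ℝ)).mono' ?_
    filter_upwards with ω
    rw [Real.norm_eq_abs, abs_of_pos (Real.exp_pos _)]
    exact Real.exp_le_one_iff.mpr (by nlinarith [sq_nonneg (X ω)])
  have key : Real.exp (-(a * ε ^ 2)) * (P S).toReal ≤ Real.exp (-Real.sqrt a) := by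
    rw [← hlap a ha]
    have h1 : ∫ ω in S, Real.exp (-(a * ε ^ 2)) ∂P ≤
        ∫ ω in S, Real.exp (-(a * (X ω) ^ 2)) ∂P := by
      refine setIntegral_mono_on (integrableOn_const (measure_ne_top P S))
        (hint.integrableOn) hSm ?_
      intro ω hω
      apply Real.exp_le_exp.mpr
      have hxe : X ω ≤ ε := hω
      have hsq : X ω ^ 2 ≤ ε ^ 2 := by nlinarith [hX0 ω]
      nlinarith [mul_le_mul_of_nonneg_left hsq ha.le]
    have h2 : ∫ ω in S, Real.exp (-(a * (X ω) ^ 2)) ∂P ≤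
        ∫ ω, Real.exp (-(a * (X ω) ^ 2)) ∂P := by
      refine setIntegral_le_integral hint ?_
      filter_upwards with ω using (Real.exp_pos _).le
    have h0 : ∫ ω in S, Real.exp (-(a * ε ^ 2)) ∂P
        = Real.exp (-(a * ε ^ 2)) * (P S).toReal := by
      rw [setIntegral_const, smul_eq_mul, mul_comm, measureReal_def]
    linarith [h1, h2, h0 ▸ h1]
  have htoReal : (P S).toReal ≤ Real.exp (-(1 / (4 * ε ^ 2))) := by
    have hc : 0 < Real.exp (-(a * ε ^ 2)) := Real.exp_pos _
    have : (P S).toReal ≤ Real.exp (-Real.sqrt a) / Real.exp (-(a * ε ^ 2)) := by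
      rw [le_div_iff₀ hc]; linarith [key]
    rw [← Real.exp_sub] at this
    convert this using 2
    rw [hsqrt, ha_def]
    field_simp
    ring
  calc P S = ENNReal.ofReal (P S).toReal := (ENNReal.ofReal_toReal (measure_ne_top P S)).symm
    _ ≤ _ := ENNReal.ofReal_le_ofReal htoReal
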